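/- Let z ∈ R^d lie on a ray from the origin O in direction v (a unit vector), and let K be a (d−1)-dimensional convex body lying in a hyperplane with unit normal u, whose relative interior intersects the segment Oz at a point x. Let G be the polar (with respect to O) of the set of hyperplanes through z not meeting the relative interior of K, let K̄ be the orthogonal projection of K onto the hyperplane through O orthogonal to v, and let h be the hyperplane parallel to K's hyperplane passing through z. Then G − h* = α·K̄*, where α = ‖xz‖/‖Oz‖, h* = u/⟨u,z⟩ is the polar point of h, and K̄* is the polar of K̄ within the hyperplane v^⊥ through the origin. -/

import Mathlib

open scoped Pointwise RealInnerProductSpace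

/-- Let `z = t•v` (`t > 0`, `‖v‖ = 1`) lie on a ray from the
origin, and let `K` be a `(d−1)`-dimensional convex body lying in the
hyperplane through `x` with unit normal `u`, where `x ∈ K` lies in the open
segment `Oz`. Let `G` be the polar of the dual cap of `K` with respect to `z`
(the polar points `w` of hyperplanes `{p : ⟨w,p⟩ = 1}` through `z` having `K`
on their near side), let `K̄` be the projection of `K` onto `v^⊥`, let
`K̄*` be the polar of `K̄` within `v^⊥`, and let `h* = u/⟨u,z⟩` be the polar
point of the hyperplane through `z` parallel to `K`. Then
`G − h* = α·K̄*`, where `α = ‖xz‖/‖Oz‖`. -/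
theorem stmt14 {d : ℕ} (u v z x : EuclideanSpace ℝ (Fin d))
    (hu : ‖u‖ = 1) (hv : ‖v‖ = 1) (t : ℝ) (ht : 0 < t) (hz : z = t • v)
    (K : Set (EuclideanSpace ℝ (Fin d)))
    (hKconv : Convex ℝ K) (hKcomp : IsCompact K)
    (hKplane : ∀ p ∈ K, ⟪u, p⟫ = ⟪u, x⟫)
    (hx : x ∈ K) (hxseg : x ∈ openSegment ℝ (0 : EuclideanSpace ℝ (Fin d)) z)
    (huz : ⟪u, z⟫ ≠ 0)
    (G Kbar KbarStar : Set (EuclideanSpace ℝ (Fin d)))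
    (hG : G = {w | ⟪w, z⟫ = 1 ∧ ∀ p ∈ K, ⟪w, p⟫ ≤ 1})
    (hKbar : Kbar = (fun p => p - ⟪v, p⟫ • v) '' K)
    (hKbarStar : KbarStar = {q | ⟪q, v⟫ = 0 ∧ ∀ p ∈ Kbar, ⟪q, p⟫ ≤ 1}) :
    G - {(⟪u, z⟫)⁻¹ • u} = (dist x z / ‖z‖) • KbarStar := by

  obtain ⟨a, b, ha, hb, hab, hx'⟩ := hxseg
  simp only [smul_zero, zero_add] at hx'
  have hzn : ‖z‖ = t := by
    rw [hz, norm_smul, hv, mul_one, Real.norm_eq_abs, abs_of_pos ht]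
  have hb1 : b < 1 := by linarith
  set α : ℝ := 1 - b with hαdef
  have hα0 : 0 < α := by simp only [hαdef]; linarith
  have hαeq : dist x z / ‖z‖ = α := by
    rw [← hx', dist_eq_norm, show b • z - z = (b - 1) • z by module,
      norm_smul, hzn, Real.norm_eq_abs, abs_of_neg (by linarith : b - 1 < 0)]
    field_simp [ht.ne']
    linarith
  have hux : ⟪u, x⟫ = b * ⟪u, z⟫ := by rw [← hx', real_inner_smul_right]
  have hvz : ∀ q : EuclideanSpace ℝ (Fin d), ⟪q, z⟫ = t * ⟪q, v⟫ := by
    intro q; rw [hz, real_inner_smul_right, real_inner_comm]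
  have hhz : ⟪(⟪u, z⟫)⁻¹ • u, z⟫ = 1 := by
    rw [real_inner_smul_left, inv_mul_cancel₀ huz]
  have hhp : ∀ p ∈ K, ⟪(⟪u, z⟫)⁻¹ • u, p⟫ = b := by
    intro p hp
    rw [real_inner_smul_left, hKplane p hp, hux, mul_comm b, ← mul_assoc,
      inv_mul_cancel₀ huz, one_mul]
  rw [hαeq, Set.sub_singleton]
  ext w
  simp only [Set.mem_image, Set.mem_smul_set]
  constructor
  · rintro ⟨g, hgG, rfl⟩
    rw [hG] at hgG
    obtain ⟨hg1, hg2⟩ := hgG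
    refine ⟨α⁻¹ • (g - (⟪u, z⟫)⁻¹ • u), ?_, by rw [smul_smul]; field_simp; exact one_smul _ _⟩
    have hwz : ⟪g - (⟪u, z⟫)⁻¹ • u, z⟫ = 0 := by
      rw [inner_sub_left, hg1, hhz]; ring
    have hwv : ⟪g - (⟪u, z⟫)⁻¹ • u, v⟫ = 0 := by
      have := hvz (g - (⟪u, z⟫)⁻¹ • u)
      rw [hwz] at this
      have := this.symm
      rcases mul_eq_zero.mp this with h | h
      · exact absurd h ht.ne'
      · exact h
    rw [hKbarStar]
    constructor
    · rw [real_inner_smul_left, hwv, mul_zero]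
    · intro pbar hpbar
      rw [hKbar] at hpbar
      obtain ⟨p, hp, rfl⟩ := hpbar
      rw [real_inner_smul_left, inner_sub_right, real_inner_smul_right, hwv,
        mul_zero, sub_zero, inner_sub_left, hhp p hp]
      have h1 : ⟪g, p⟫ ≤ 1 := hg2 p hp
      rw [inv_mul_le_iff₀ hα0, mul_one]
      linarith
  · rintro ⟨q, hq, rfl⟩
    rw [hKbarStar] at hq
    obtain ⟨hq1, hq2⟩ := hq
    refine ⟨α • q + (⟪u, z⟫)⁻¹ • u, ?_, by abel⟩
    rw [hG]
    constructor
    · rw [inner_add_left, real_inner_smul_left, hhz, hvz, hq1]; ring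
    · intro p hp
      have hqp : ⟪q, p⟫ ≤ 1 := by
        have := hq2 (p - ⟪v, p⟫ • v) (by rw [hKbar]; exact ⟨p, hp, rfl⟩)
        rwa [inner_sub_right, real_inner_smul_right, hq1, mul_zero, sub_zero]
          at this
      rw [inner_add_left, real_inner_smul_left, hhp p hp]
      nlinarith
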